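/- Let X be a set, k : X × X → ℝ a symmetric positive-semidefinite kernel, and η > 0. For a finite tuple A = (a_1,…,a_m) of points of X define k(x, A) = (k(x,a_1),…,k(x,a_m)), K(A) = [k(a_i,a_j)]_{i,j=1}^m, and σ_A²(x) = k(x,x) − k(x,A)ᵀ(K(A) + ηI)⁻¹ k(x,A). If B is a finite tuple of points of X obtained from A by appending additional points (so A is an initial sub-tuple of B), then σ_B²(x) ≤ σ_A²(x) for all x ∈ X. -/

import Mathlib

open Matrix

/-- A kernel is symmetric positive semidefinite if every finite kernel matrix is
positive semidefinite. -/
def IsPSDKernel {X : Type*} (k : X → X → ℝ) : Prop :=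
  ∀ (m : ℕ) (y : Fin m → X), (Matrix.of fun i j : Fin m => k (y i) (y j)).PosSemidef

/-- Posterior variance `σ_A²(y) = k(y,y) - k(y,A)ᵀ (K(A) + η I)⁻¹ k(y,A)` given a
finite tuple `A` of observation locations. -/
noncomputable def postVarTuple {X : Type*} (k : X → X → ℝ) (η : ℝ) {m : ℕ}
    (A : Fin m → X) (y : X) : ℝ :=
  k y y - (fun i : Fin m => k y (A i)) ⬝ᵥ
    (((Matrix.of fun i j : Fin m => k (A i) (A j)) + η • (1 : Matrix (Fin m) (Fin m) ℝ))⁻¹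
      *ᵥ fun i : Fin m => k y (A i))

lemma smul_one_posDef {m : ℕ} {η : ℝ} (hη : 0 < η) :
    (η • (1 : Matrix (Fin m) (Fin m) ℝ)).PosDef := by
  rw [posDef_iff_dotProduct_mulVec]
  constructor
  · unfold Matrix.IsHermitian
    ext i j
    simp [conjTranspose_apply, one_apply, Matrix.smul_apply, eq_comm]
  · intro x hx
    have h : star x ⬝ᵥ ((η • (1 : Matrix (Fin m) (Fin m) ℝ)) *ᵥ x) = η * (x ⬝ᵥ x) := by
      simp [smul_mulVec, dotProduct_smul, star_trivial]
    rw [h]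
    exact mul_pos hη (by simpa using dotProduct_star_self_pos_iff.mpr hx)

lemma quad_le {m : ℕ} {M : Matrix (Fin m) (Fin m) ℝ} (hM : M.PosDef)
    (v z : Fin m → ℝ) :
    2 * (z ⬝ᵥ v) - z ⬝ᵥ (M *ᵥ z) ≤ v ⬝ᵥ (M⁻¹ *ᵥ v) := by
  have hdet : IsUnit M.det := (Matrix.isUnit_iff_isUnit_det M).1 hM.isUnit
  have hMinv : M * M⁻¹ = 1 := Matrix.mul_nonsing_inv M hdet
  have hsymm : Mᵀ = M := by
    ext i j
    have := congrFun (congrFun hM.isHermitian.eq i) j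
    simpa [conjTranspose_apply] using this
  set w : Fin m → ℝ := M⁻¹ *ᵥ v with hw
  have e1 : M *ᵥ w = v := by
    rw [hw, mulVec_mulVec, hMinv, one_mulVec]
  have h0 : 0 ≤ (z - w) ⬝ᵥ (M *ᵥ (z - w)) := by
    simpa [star_trivial] using hM.posSemidef.dotProduct_mulVec_nonneg (z - w)
  have e2 : w ⬝ᵥ (M *ᵥ z) = v ⬝ᵥ z := by
    rw [dotProduct_mulVec, ← mulVec_transpose, hsymm, e1]
  have e3 : (z - w) ⬝ᵥ (M *ᵥ (z - w)) =
      z ⬝ᵥ (M *ᵥ z) - z ⬝ᵥ v - v ⬝ᵥ z + w ⬝ᵥ v := by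
    rw [mulVec_sub, sub_dotProduct, dotProduct_sub, dotProduct_sub, e1, e2]
    ring
  have e4 : w ⬝ᵥ v = v ⬝ᵥ w := dotProduct_comm _ _
  have e5 : z ⬝ᵥ v = v ⬝ᵥ z := dotProduct_comm _ _
  rw [e3, e4, e5] at h0
  linarith

lemma sum_prefix {m n : ℕ} (h : m ≤ n) (g : Fin n → ℝ)
    (hg : ∀ i : Fin n, m ≤ (i : ℕ) → g i = 0) :
    ∑ i, g i = ∑ i : Fin m, g (Fin.castLE h i) := by
  classical
  have hmap : ∑ i ∈ Finset.univ.map (Fin.castLEOrderEmb h).toEmbedding, g i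
      = ∑ i : Fin m, g (Fin.castLE h i) := by
    rw [Finset.sum_map]
    rfl
  rw [← hmap]
  refine (Finset.sum_subset (Finset.subset_univ _) ?_).symm
  intro i _ hi
  refine hg i ?_
  by_contra hlt
  exact hi (Finset.mem_map.2 ⟨⟨(i : ℕ), not_le.1 hlt⟩, Finset.mem_univ _, by
    simp [Fin.castLEOrderEmb, Fin.castLE]⟩)

/-- **Lemma A.3 (BORE paper).** For a symmetric positive-semidefinite kernel and
`η > 0`, the posterior variance is monotonically non-increasing under the addition
of observation locations: if `B` extends the tuple `A` (i.e. `A` is an initial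
sub-tuple of `B`), then `σ_B²(y) ≤ σ_A²(y)` for every `y`. -/
theorem postVar_mono {X : Type*} (k : X → X → ℝ)
    (hsymm : ∀ a b : X, k a b = k b a) (hpsd : IsPSDKernel k)
    (η : ℝ) (hη : 0 < η) {m n : ℕ} (hmn : m ≤ n) (B : Fin n → X) (y : X) :
    postVarTuple k η B y ≤ postVarTuple k η (B ∘ Fin.castLE hmn) y := by
  classical
  set A : Fin m → X := B ∘ Fin.castLE hmn with hA
  set MA : Matrix (Fin m) (Fin m) ℝ :=
    (Matrix.of fun i j : Fin m => k (A i) (A j)) + η • (1 : Matrix (Fin m) (Fin m) ℝ) with hMAdef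
  set MB : Matrix (Fin n) (Fin n) ℝ :=
    (Matrix.of fun i j : Fin n => k (B i) (B j)) + η • (1 : Matrix (Fin n) (Fin n) ℝ) with hMBdef
  have hMA : MA.PosDef := Matrix.PosDef.posSemidef_add (hpsd m A) (smul_one_posDef hη)
  have hMB : MB.PosDef := Matrix.PosDef.posSemidef_add (hpsd n B) (smul_one_posDef hη)
  set v : Fin m → ℝ := fun i => k y (A i) with hv
  set w : Fin n → ℝ := fun i => k y (B i) with hw
  suffices h : v ⬝ᵥ (MA⁻¹ *ᵥ v) ≤ w ⬝ᵥ (MB⁻¹ *ᵥ w) by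
    simp only [postVarTuple]
    exact sub_le_sub_left h _
  set z : Fin m → ℝ := MA⁻¹ *ᵥ v with hz
  set z' : Fin n → ℝ := fun i => if h : (i : ℕ) < m then z ⟨i, h⟩ else 0 with hz'
  have hz'0 : ∀ i : Fin n, m ≤ (i : ℕ) → z' i = 0 := fun i hi => dif_neg (not_lt.2 hi)
  have hz'c : ∀ i : Fin m, z' (Fin.castLE hmn i) = z i := by
    intro i
    simp [hz', Fin.castLE]
  have e1 : MA *ᵥ z = v := by
    rw [hz, mulVec_mulVec,
      Matrix.mul_nonsing_inv MA ((Matrix.isUnit_iff_isUnit_det MA).1 hMA.isUnit), one_mulVec]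
  have key1 : z' ⬝ᵥ w = z ⬝ᵥ v := by
    unfold dotProduct
    rw [sum_prefix hmn (fun i => z' i * w i) (fun i hi => by simp [hz'0 i hi])]
    refine Finset.sum_congr rfl fun i _ => ?_
    rw [hz'c]
    rfl
  have entry : ∀ i j : Fin m, MB (Fin.castLE hmn i) (Fin.castLE hmn j) = MA i j := by
    intro i j
    simp [hMAdef, hMBdef, Matrix.add_apply, Matrix.smul_apply, Matrix.one_apply,
      Fin.castLE_inj, hA, Function.comp]
  have inner : ∀ i : Fin m, (MB *ᵥ z') (Fin.castLE hmn i) = (MA *ᵥ z) i := by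
    intro i
    simp only [mulVec, dotProduct]
    rw [sum_prefix hmn (fun j => MB (Fin.castLE hmn i) j * z' j)
      (fun j hj => by simp [hz'0 j hj])]
    refine Finset.sum_congr rfl fun j _ => ?_
    rw [hz'c, entry]
  have key2 : z' ⬝ᵥ (MB *ᵥ z') = z ⬝ᵥ (MA *ᵥ z) := by
    unfold dotProduct
    rw [sum_prefix hmn (fun i => z' i * (MB *ᵥ z') i)
      (fun i hi => by simp [hz'0 i hi])]
    refine Finset.sum_congr rfl fun i _ => ?_
    rw [hz'c, inner]
  have base : v ⬝ᵥ (MA⁻¹ *ᵥ v) = 2 * (z ⬝ᵥ v) - z ⬝ᵥ (MA *ᵥ z) := by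
    have h1 : z ⬝ᵥ v = v ⬝ᵥ (MA⁻¹ *ᵥ v) := dotProduct_comm _ _
    have h2 : z ⬝ᵥ (MA *ᵥ z) = z ⬝ᵥ v := by rw [e1]
    rw [h2, ← h1]; ring
  calc v ⬝ᵥ (MA⁻¹ *ᵥ v) = 2 * (z' ⬝ᵥ w) - z' ⬝ᵥ (MB *ᵥ z') := by
        rw [base, key1, key2]
    _ ≤ w ⬝ᵥ (MB⁻¹ *ᵥ w) := quad_le hMB w z'
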